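/- Let U be a Hilbert space, Q : U → U* symmetric, injective, and not surjective, with image dense in U* (which follows from injectivity and symmetry). If a ∈ U* does not belong to im Q, then the subspace L = {(δp, δq) : ∃ v ∈ U, Q v = δp·a, δq = ⟨a, v⟩} equals {(0,0)}, and hence is not Lagrangian in ℝ². -/

import Mathlib

open Module

/-- The `L`-derivative subspace for `M = ℝ`:
`L = {(δp, δq) : ∃ v, Q v = δp · a and δq = ⟨a, v⟩} ⊆ ℝ²`. -/
def Lderiv {U : Type*} [NormedAddCommGroup U] [InnerProductSpace ℝ U]
    (Q : U →L[ℝ] (U →L[ℝ] ℝ)) (a : U →L[ℝ] ℝ) : Submodule ℝ (ℝ × ℝ) where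
  carrier := {x | ∃ v : U, Q v = x.1 • a ∧ x.2 = a v}
  add_mem' := by
    rintro ⟨p₁, q₁⟩ ⟨p₂, q₂⟩ ⟨v₁, hv₁, hq₁⟩ ⟨v₂, hv₂, hq₂⟩
    refine ⟨v₁ + v₂, by simp [hv₁, hv₂, add_smul], ?_⟩
    show q₁ + q₂ = a (v₁ + v₂)
    rw [map_add]
    exact congrArg₂ (· + ·) hq₁ hq₂
  zero_mem' := ⟨0, by simp, by simp⟩
  smul_mem' := by
    rintro c ⟨p, q⟩ ⟨v, hv, hq⟩
    refine ⟨c • v, by simp [hv, smul_smul], ?_⟩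
    show c • q = a (c • v)
    rw [map_smul, ← hq]

/-- if `Q : U → U*` is symmetric, injective and not surjective
(so that `im Q` is dense but not closed), and `a ∉ im Q`, then `L = {(0,0)}`
and hence `L` is not a Lagrangian (one-dimensional) subspace of `ℝ²`. -/
theorem Lderiv_trivial_of_not_closed_range {U : Type*}
    [NormedAddCommGroup U] [InnerProductSpace ℝ U] [CompleteSpace U]
    (Q : U →L[ℝ] (U →L[ℝ] ℝ))
    (hQsymm : ∀ x y : U, Q x y = Q y x)
    (hinj : Function.Injective Q)
    (hnsurj : ¬ Function.Surjective Q)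
    (a : U →L[ℝ] ℝ) (ha : a ∉ Set.range fun v : U => Q v) :
    Dense (Set.range fun v : U => Q v) ∧
    Lderiv Q a = ⊥ ∧ finrank ℝ (Lderiv Q a) ≠ 1 := by
  have hdense : Dense (Set.range fun v : U => Q v) := by
    set d := InnerProductSpace.toDual ℝ U with hd
    set T : U →ₗ[ℝ] U :=
      { toFun := fun v => d.symm (Q v)
        map_add' := by intro x y; simp
        map_smul' := by intro c x; simp }
    have horth : (LinearMap.range T)ᗮ = ⊥ := by
      rw [Submodule.eq_bot_iff]
      intro x hx
      apply hinj
      rw [map_zero]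
      ext v
      have := hx (T v) ⟨v, rfl⟩
      have h2 : inner ℝ (d.symm (Q v)) x = Q v x := InnerProductSpace.toDual_symm_apply
      simp only [T, LinearMap.coe_mk, AddHom.coe_mk] at this
      rw [h2] at this
      rw [hQsymm] at this
      simpa using this
    have hdT : Dense ((LinearMap.range T : Submodule ℝ U) : Set U) := by
      rw [← Submodule.topologicalClosure_eq_top_iff] at horth
      exact Submodule.dense_iff_topologicalClosure_eq_top.mpr horth
    have himg : (Set.range fun v : U => Q v) = d '' (LinearMap.range T : Set U) := by
      ext f
      constructor
      · rintro ⟨v, rfl⟩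
        exact ⟨T v, ⟨v, rfl⟩, by simp [T]⟩
      · rintro ⟨x, ⟨v, rfl⟩, rfl⟩
        exact ⟨v, by simp [T]⟩
    rw [himg]
    have hdi : IsDenseInducing (d.toHomeomorph) :=
      ⟨d.toHomeomorph.isInducing, d.toHomeomorph.surjective.denseRange⟩
    exact hdi.dense_image.mpr hdT
  have hbot : Lderiv Q a = ⊥ := by
    rw [Submodule.eq_bot_iff]
    rintro ⟨p, q⟩ ⟨v, hv, hq⟩
    have hp : p = 0 := by
      by_contra hp
      refine ha ⟨p⁻¹ • v, ?_⟩
      show Q (p⁻¹ • v) = a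
      rw [map_smul, hv, smul_smul, inv_mul_cancel₀ hp, one_smul]
    subst hp
    rw [zero_smul] at hv
    have hv0 : v = 0 := hinj (by rw [hv, map_zero])
    subst hv0
    simp only [map_zero] at hq
    simp [hq]
  refine ⟨hdense, hbot, ?_⟩
  rw [hbot]
  simp
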